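/- With the setup of the combinatorial determinantal condition (P_k(m), Q_p, q, N(m) as defined from data l, d, s and m ∈ ℤ^r): if N(m) ⊆ {0,1} and N(m) contains two consecutive integers, then for every k with P_k(m) < min Q or P_k(m) > max Q one has #P_k(m) = l_k, and moreover ⋃_{k=1}^r P_k(m) ⊆ [0, s_0+s_1+···+s_n]. -/

import Mathlib

/-- `P_k(m) = {z ∈ ℤ : m < z·d ≤ m + l}`, the integers in `(m/d, (m+l)/d]`. -/
def Pset (m : ℤ) (d l : ℕ) : Set ℤ := {z : ℤ | m < z * d ∧ z * d ≤ m + l}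

/-- The set of sums of `p` distinct entries of `s`. -/
def Sset {n : ℕ} (s : Fin (n + 1) → ℕ) (p : ℕ) : Set ℤ :=
  {t : ℤ | ∃ A : Finset (Fin (n + 1)), A.card = p ∧ t = ∑ i ∈ A, (s i : ℤ)}

/-- `q(z) = Σ_{P_k(m) < z} l_k`, where `P_k < z` means `z·d_k > m_k + l_k`. -/
def qval {r : ℕ} (l d : Fin r → ℕ) (m : Fin r → ℤ) (z : ℤ) : ℕ :=
  ∑ k ∈ Finset.univ.filter (fun k => m k + (l k : ℤ) < z * (d k : ℤ)), l k

/-- `N(m) = { p − q(z) : p ∈ [0, n+1], z ∈ Q_p }` with `Q_p = S_p \ ⋃_k P_k(m)`. -/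
def Nset {r n : ℕ} (l d : Fin r → ℕ) (s : Fin (n + 1) → ℕ) (m : Fin r → ℤ) : Set ℤ :=
  {ν : ℤ | ∃ p : ℕ, p ≤ n + 1 ∧ ∃ z : ℤ,
    (z ∈ Sset s p ∧ ∀ k, z ∉ Pset (m k) (d k) (l k)) ∧
    ν = (p : ℤ) - (qval l d m z : ℤ)}

/-- `Q = ⋃_p Q_p`: elements of some `S_p`, `p ≤ n+1`, not covered by any `P_k(m)`. -/
def Qset {r n : ℕ} (l d : Fin r → ℕ) (s : Fin (n + 1) → ℕ) (m : Fin r → ℤ) : Set ℤ :=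
  {z : ℤ | (∃ p ≤ n + 1, z ∈ Sset s p) ∧ ∀ k, z ∉ Pset (m k) (d k) (l k)}

/- ------------------ auxiliary lemmas ------------------ -/

lemma Pset_eq_Ioc (m : ℤ) (d l : ℕ) (hd : 1 ≤ d) :
    Pset m d l = ↑(Finset.Ioc (m / (d : ℤ)) ((m + (l : ℤ)) / (d : ℤ))) := by
  have hd' : (0 : ℤ) < d := by exact_mod_cast hd
  ext z
  simp only [Pset, Set.mem_setOf_eq, Finset.coe_Ioc, Set.mem_Ioc]
  rw [Int.ediv_lt_iff_lt_mul hd', Int.le_ediv_iff_mul_le hd']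

lemma Pfin_card_le (m : ℤ) (d l : ℕ) (hd : 1 ≤ d) :
    (Finset.Ioc (m / (d : ℤ)) ((m + (l : ℤ)) / (d : ℤ))).card ≤ l := by
  have hd' : (0 : ℤ) < d := by exact_mod_cast hd
  rw [Int.card_Ioc]
  have h1 : (m + (l : ℤ)) / d ≤ m / d + l := by
    have hle : (m + (l : ℤ)) ≤ m + (l : ℤ) * d := by nlinarith
    calc (m + (l : ℤ)) / d ≤ (m + (l : ℤ) * d) / d := Int.ediv_le_ediv hd' hle
      _ = m / d + l := Int.add_mul_ediv_right _ _ (by omega)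
  omega

lemma le_orderEmb_apply {N p : ℕ} (f : Fin p ↪o Fin N) :
    ∀ j (h : j < p), j ≤ (f ⟨j, h⟩ : ℕ) := by
  intro j
  induction j with
  | zero => intro _; omega
  | succ c ih =>
    intro h
    have hc : c < p := by omega
    have h1 : f ⟨c, hc⟩ < f ⟨c + 1, h⟩ := f.strictMono (by simp [Fin.lt_def])
    have h2 := ih hc
    rw [Fin.lt_def] at h1
    omega

lemma sum_bot_le {n : ℕ} (s : Fin (n + 1) → ℕ) (hmono : Monotone s) {p : ℕ} (hp : p ≤ n + 1)
    (A : Finset (Fin (n + 1))) (hA : A.card = p) :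
    ∑ i ∈ Finset.univ.filter (fun i : Fin (n + 1) => (i : ℕ) < p), (s i : ℤ)
      ≤ ∑ i ∈ A, (s i : ℤ) := by
  have hbot : Finset.univ.filter (fun i : Fin (n + 1) => (i : ℕ) < p)
      = Finset.map (Fin.castLEEmb hp) Finset.univ := by
    ext i
    constructor
    · intro hi
      rw [Finset.mem_filter] at hi
      exact Finset.mem_map.2 ⟨⟨i, hi.2⟩, Finset.mem_univ _, by ext; simp⟩
    · intro hi
      rw [Finset.mem_filter]
      refine ⟨Finset.mem_univ _, ?_⟩
      obtain ⟨j, -, rfl⟩ := Finset.mem_map.1 hi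
      simpa using j.isLt
  have hAeq : Finset.map (A.orderEmbOfFin hA).toEmbedding Finset.univ = A := by
    apply Finset.coe_injective
    rw [Finset.coe_map, Finset.coe_univ, Set.image_univ]
    exact A.range_orderEmbOfFin hA
  rw [hbot, ← hAeq, Finset.sum_map, Finset.sum_map]
  apply Finset.sum_le_sum
  intro i _
  have hle : (Fin.castLE hp i : Fin (n + 1)) ≤ A.orderEmbOfFin hA i := by
    rw [Fin.le_def]
    have := le_orderEmb_apply (A.orderEmbOfFin hA) i i.isLt
    simpa using this
  have := hmono hle
  simp only [RelEmbedding.coe_toEmbedding, Fin.castLEEmb_apply]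
  exact_mod_cast this

lemma sum_le_top {n : ℕ} (s : Fin (n + 1) → ℕ) (hmono : Monotone s) {p : ℕ} (hp : p ≤ n + 1)
    (A : Finset (Fin (n + 1))) (hA : A.card = p) :
    ∑ i ∈ A, (s i : ℤ)
      ≤ ∑ i ∈ Finset.univ.filter (fun i : Fin (n + 1) => n + 1 - p ≤ (i : ℕ)), (s i : ℤ) := by
  classical
  have hcompl : Finset.univ.filter (fun i : Fin (n + 1) => n + 1 - p ≤ (i : ℕ))
      = (Finset.univ.filter (fun i : Fin (n + 1) => (i : ℕ) < n + 1 - p))ᶜ := by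
    ext i
    simp only [Finset.mem_filter, Finset.mem_univ, true_and, Finset.mem_compl]
    omega
  have hAc : Aᶜ.card = n + 1 - p := by
    rw [Finset.card_compl, hA]
    simp
  have h1 := sum_bot_le s hmono (show n + 1 - p ≤ n + 1 by omega) Aᶜ hAc
  have h2 : ∑ i ∈ A, (s i : ℤ) + ∑ i ∈ Aᶜ, (s i : ℤ) = ∑ i, (s i : ℤ) :=
    Finset.sum_add_sum_compl A _
  have h3 : ∑ i ∈ Finset.univ.filter (fun i : Fin (n + 1) => (i : ℕ) < n + 1 - p), (s i : ℤ)
      + ∑ i ∈ (Finset.univ.filter (fun i : Fin (n + 1) => (i : ℕ) < n + 1 - p))ᶜ, (s i : ℤ)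
      = ∑ i, (s i : ℤ) :=
    Finset.sum_add_sum_compl _ _
  rw [hcompl]
  linarith

lemma minside (r n : ℕ) (l d : Fin r → ℕ)
    (hl : ∀ k, 1 ≤ l k) (hd : ∀ k, 1 ≤ d k)
    (s : Fin (n + 1) → ℕ) (hs : ∀ i, 0 < s i) (hmono : Monotone s)
    (m : Fin r → ℤ) (hsub : Nset l d s m ⊆ {0, 1})
    (z1 : ℤ) (hz1 : IsLeast (Qset l d s m) z1) (k : Fin r)
    (hk : m k + (l k : ℤ) < z1 * (d k : ℤ)) :
    (Pset (m k) (d k) (l k)).ncard = l k ∧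
      Pset (m k) (d k) (l k) ⊆ Set.Icc (0 : ℤ) (∑ i, (s i : ℤ)) := by
  classical
  obtain ⟨⟨p, hp, hzS⟩, hnotP⟩ := hz1.1
  obtain ⟨A, hA, hzsum⟩ := hzS
  set F : Finset (Fin r) :=
    Finset.univ.filter (fun k => m k + (l k : ℤ) < z1 * (d k : ℤ)) with hF
  set Pfin : Fin r → Finset ℤ :=
    fun k => Finset.Ioc (m k / (d k : ℤ)) ((m k + (l k : ℤ)) / (d k : ℤ)) with hPfin
  have hPeq : ∀ k, Pset (m k) (d k) (l k) = ↑(Pfin k) := fun k => Pset_eq_Ioc _ _ _ (hd k)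
  have hPcard : ∀ k, (Pfin k).card ≤ l k := fun k => Pfin_card_le _ _ _ (hd k)
  have hqp : qval l d m z1 ≤ p := by
    have hin : ((p : ℤ) - (qval l d m z1 : ℤ)) ∈ Nset l d s m :=
      ⟨p, hp, z1, ⟨⟨A, hA, hzsum⟩, hnotP⟩, rfl⟩
    have := hsub hin
    simp only [Set.mem_insert_iff, Set.mem_singleton_iff] at this
    omega
  set σz : ℕ → ℤ :=
    fun j => ∑ i ∈ Finset.univ.filter (fun i : Fin (n + 1) => (i : ℕ) < j), (s i : ℤ) with hσz
  have hins : ∀ j (h : j < n + 1),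
      Finset.univ.filter (fun i : Fin (n + 1) => (i : ℕ) < j + 1)
        = insert ⟨j, h⟩ (Finset.univ.filter (fun i : Fin (n + 1) => (i : ℕ) < j)) := by
    intro j h
    ext i
    simp only [Finset.mem_filter, Finset.mem_univ, true_and, Finset.mem_insert, Fin.ext_iff]
    omega
  have hnm : ∀ j (h : j < n + 1),
      (⟨j, h⟩ : Fin (n + 1)) ∉ Finset.univ.filter (fun i : Fin (n + 1) => (i : ℕ) < j) := by
    intro j h
    simp
  have hstep : ∀ j (h : j < n + 1), σz (j + 1) = σz j + (s ⟨j, h⟩ : ℤ) := by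
    intro j h
    simp only [hσz]
    rw [hins j h, Finset.sum_insert (hnm j h)]
    ring
  have hσmono : ∀ b, b ≤ n + 1 → ∀ a, a < b → σz a < σz b := by
    intro b
    induction b with
    | zero => intro _ a h; omega
    | succ c ih =>
      intro hb a ha
      have hc : c < n + 1 := by omega
      have h1 : σz c < σz (c + 1) := by
        rw [hstep c hc]
        have := hs ⟨c, hc⟩
        omega
      rcases Nat.lt_succ_iff_lt_or_eq.1 ha with h' | h'
      · exact lt_trans (ih (by omega) a h') h1
      · rw [h']; exact h1
  have hbcard : ∀ j, j ≤ n + 1 →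
      (Finset.univ.filter (fun i : Fin (n + 1) => (i : ℕ) < j)).card = j := by
    intro j
    induction j with
    | zero => intro _; simp
    | succ c ih =>
      intro hc
      rw [hins c (by omega), Finset.card_insert_of_notMem (hnm c (by omega)), ih (by omega)]
  have hσmem : ∀ j, j ≤ n + 1 → σz j ∈ Sset s j := fun j hj => ⟨_, hbcard j hj, rfl⟩
  have hσnonneg : ∀ j, 0 ≤ σz j :=
    fun j => Finset.sum_nonneg (fun i _ => by positivity)
  have hσtop : σz (n + 1) = ∑ i, (s i : ℤ) := by
    simp only [hσz]
    apply Finset.sum_congr _ (fun _ _ => rfl)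
    ext i
    simpa using i.isLt
  have hσle : σz p ≤ z1 := by rw [hzsum]; exact sum_bot_le s hmono hp A hA
  have hcov : ∀ j, j < p → ∃ k', k' ∈ F ∧ σz j ∈ Pfin k' := by
    intro j hj
    have hjlt : σz j < z1 := lt_of_lt_of_le (hσmono p hp j hj) hσle
    have hnotQ : σz j ∉ Qset l d s m := fun hQ => absurd (hz1.2 hQ) (not_le.2 hjlt)
    have hnall : ¬ ∀ k', σz j ∉ Pset (m k') (d k') (l k') := by
      intro hall
      exact hnotQ ⟨⟨j, by omega, hσmem j (by omega)⟩, hall⟩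
    push_neg at hnall
    obtain ⟨k', hk'⟩ := hnall
    obtain ⟨h1, h2⟩ := hk'
    have hd' : (0 : ℤ) < (d k' : ℤ) := by exact_mod_cast hd k'
    have hmemF : k' ∈ F := by
      rw [hF, Finset.mem_filter]
      refine ⟨Finset.mem_univ _, ?_⟩
      have h3 : (σz j + 1) * (d k') ≤ z1 * (d k') :=
        mul_le_mul_of_nonneg_right (by omega) (le_of_lt hd')
      have h4 : (σz j + 1) * (d k' : ℤ) = σz j * d k' + d k' := by ring
      have hzd : m k' < z1 * d k' := by linarith
      by_contra hcon
      push_neg at hcon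
      exact hnotP k' ⟨hzd, hcon⟩
    refine ⟨k', hmemF, ?_⟩
    have : σz j ∈ (↑(Pfin k') : Set ℤ) := by
      rw [← hPeq k']
      exact ⟨h1, h2⟩
    exact_mod_cast this
  set U : Finset ℤ := (Finset.range p).image σz with hU
  have hUcard : U.card = p := by
    rw [hU, Finset.card_image_of_injOn, Finset.card_range]
    intro a ha b hb hab
    simp only [Finset.coe_range, Set.mem_Iio] at ha hb
    by_contra hne
    rcases lt_or_gt_of_ne hne with h | h
    · exact absurd hab (ne_of_lt (hσmono b (by omega) a h))
    · exact absurd hab.symm (ne_of_lt (hσmono a (by omega) b h))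
  have hUsub : U ⊆ F.biUnion Pfin := by
    intro w hw
    rw [hU, Finset.mem_image] at hw
    obtain ⟨j, hj, rfl⟩ := hw
    rw [Finset.mem_range] at hj
    obtain ⟨k', hk1, hk2⟩ := hcov j hj
    exact Finset.mem_biUnion.2 ⟨k', hk1, hk2⟩
  have hqF : qval l d m z1 = ∑ k' ∈ F, l k' := rfl
  have hchain1 : (F.biUnion Pfin).card ≤ ∑ k' ∈ F, (Pfin k').card := Finset.card_biUnion_le
  have hchain2 : ∑ k' ∈ F, (Pfin k').card ≤ ∑ k' ∈ F, l k' :=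
    Finset.sum_le_sum (fun k' _ => hPcard k')
  have hUle : p ≤ (F.biUnion Pfin).card := hUcard ▸ Finset.card_le_card hUsub
  have hsum_eq : ∑ k' ∈ F, (Pfin k').card = ∑ k' ∈ F, l k' := by omega
  have hcards : ∀ k' ∈ F, (Pfin k').card = l k' :=
    (Finset.sum_eq_sum_iff_of_le (fun k' _ => hPcard k')).1 hsum_eq
  have hBcard : (F.biUnion Pfin).card ≤ U.card := by omega
  have hBU : U = F.biUnion Pfin := Finset.eq_of_subset_of_card_le hUsub hBcard
  have hkF : k ∈ F := Finset.mem_filter.2 ⟨Finset.mem_univ _, hk⟩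
  constructor
  · rw [hPeq k, Set.ncard_coe_finset]
    exact hcards k hkF
  · intro w hw
    have hwP : w ∈ Pfin k := by
      rw [hPeq k] at hw
      exact_mod_cast hw
    have hwB : w ∈ F.biUnion Pfin := Finset.mem_biUnion.2 ⟨k, hkF, hwP⟩
    rw [← hBU, hU, Finset.mem_image] at hwB
    obtain ⟨j, hj, rfl⟩ := hwB
    rw [Finset.mem_range] at hj
    rw [Set.mem_Icc]
    refine ⟨hσnonneg j, ?_⟩
    rw [← hσtop]
    exact le_of_lt (hσmono (n + 1) le_rfl j (by omega))

lemma maxside (r n : ℕ) (l d : Fin r → ℕ)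
    (hl : ∀ k, 1 ≤ l k) (hd : ∀ k, 1 ≤ d k) (hsum : ∑ k, l k = n)
    (s : Fin (n + 1) → ℕ) (hs : ∀ i, 0 < s i) (hmono : Monotone s)
    (m : Fin r → ℤ) (hsub : Nset l d s m ⊆ {0, 1})
    (z2 : ℤ) (hz2 : IsGreatest (Qset l d s m) z2) (k : Fin r)
    (hk : z2 * (d k : ℤ) ≤ m k) :
    (Pset (m k) (d k) (l k)).ncard = l k ∧
      Pset (m k) (d k) (l k) ⊆ Set.Icc (0 : ℤ) (∑ i, (s i : ℤ)) := by
  classical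
  obtain ⟨⟨p, hp, hzS⟩, hnotP⟩ := hz2.1
  obtain ⟨A, hA, hzsum⟩ := hzS
  set G : Finset (Fin r) :=
    Finset.univ.filter (fun k => z2 * (d k : ℤ) ≤ m k) with hG
  set Pfin : Fin r → Finset ℤ :=
    fun k => Finset.Ioc (m k / (d k : ℤ)) ((m k + (l k : ℤ)) / (d k : ℤ)) with hPfin
  have hPeq : ∀ k, Pset (m k) (d k) (l k) = ↑(Pfin k) := fun k => Pset_eq_Ioc _ _ _ (hd k)
  have hPcard : ∀ k, (Pfin k).card ≤ l k := fun k => Pfin_card_le _ _ _ (hd k)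
  have hqge : p ≤ qval l d m z2 + 1 := by
    have hin : ((p : ℤ) - (qval l d m z2 : ℤ)) ∈ Nset l d s m :=
      ⟨p, hp, z2, ⟨⟨A, hA, hzsum⟩, hnotP⟩, rfl⟩
    have := hsub hin
    simp only [Set.mem_insert_iff, Set.mem_singleton_iff] at this
    omega
  have hsplit : qval l d m z2 + ∑ k' ∈ G, l k' = n := by
    have hGeq : G = Finset.univ.filter
        (fun k' => ¬ (m k' + (l k' : ℤ) < z2 * (d k' : ℤ))) := by
      ext k'
      simp only [hG, Finset.mem_filter, Finset.mem_univ, true_and, not_lt]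
      constructor
      · intro h
        have : (0 : ℤ) ≤ (l k' : ℤ) := by positivity
        linarith
      · intro h
        by_contra hc
        push_neg at hc
        exact hnotP k' ⟨hc, h⟩
    rw [hGeq]
    have := Finset.sum_filter_add_sum_filter_not Finset.univ
      (fun k' => m k' + (l k' : ℤ) < z2 * (d k' : ℤ)) l
    rw [hsum] at this
    exact this
  set τz : ℕ → ℤ :=
    fun j => ∑ i ∈ Finset.univ.filter (fun i : Fin (n + 1) => n + 1 - j ≤ (i : ℕ)), (s i : ℤ)
    with hτz
  have hins : ∀ j (h : j < n + 1),
      Finset.univ.filter (fun i : Fin (n + 1) => n + 1 - (j + 1) ≤ (i : ℕ))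
        = insert ⟨n - j, by omega⟩
            (Finset.univ.filter (fun i : Fin (n + 1) => n + 1 - j ≤ (i : ℕ))) := by
    intro j h
    ext i
    simp only [Finset.mem_filter, Finset.mem_univ, true_and, Finset.mem_insert, Fin.ext_iff]
    have := i.isLt
    omega
  have hnm : ∀ j (h : j < n + 1),
      (⟨n - j, by omega⟩ : Fin (n + 1)) ∉
        Finset.univ.filter (fun i : Fin (n + 1) => n + 1 - j ≤ (i : ℕ)) := by
    intro j h
    intro hcon
    rw [Finset.mem_filter] at hcon
    have : n + 1 - j ≤ n - j := hcon.2
    omega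
  have hstep : ∀ j (h : j < n + 1), τz (j + 1) = τz j + (s ⟨n - j, by omega⟩ : ℤ) := by
    intro j h
    simp only [hτz]
    rw [hins j h, Finset.sum_insert (hnm j h)]
    ring
  have hτmono : ∀ b, b ≤ n + 1 → ∀ a, a < b → τz a < τz b := by
    intro b
    induction b with
    | zero => intro _ a h; omega
    | succ c ih =>
      intro hb a ha
      have hc : c < n + 1 := by omega
      have h1 : τz c < τz (c + 1) := by
        rw [hstep c hc]
        have := hs ⟨n - c, by omega⟩
        omega
      rcases Nat.lt_succ_iff_lt_or_eq.1 ha with h' | h'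
      · exact lt_trans (ih (by omega) a h') h1
      · rw [h']; exact h1
  have hbcard : ∀ j, j ≤ n + 1 →
      (Finset.univ.filter (fun i : Fin (n + 1) => n + 1 - j ≤ (i : ℕ))).card = j := by
    intro j
    induction j with
    | zero =>
      intro _
      rw [Finset.filter_false_of_mem, Finset.card_empty]
      intro i _
      have := i.isLt
      omega
    | succ c ih =>
      intro hc
      rw [hins c (by omega), Finset.card_insert_of_notMem (hnm c (by omega)), ih (by omega)]
  have hτmem : ∀ j, j ≤ n + 1 → τz j ∈ Sset s j := fun j hj => ⟨_, hbcard j hj, rfl⟩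
  have hτnonneg : ∀ j, 0 ≤ τz j :=
    fun j => Finset.sum_nonneg (fun i _ => by positivity)
  have hτtop : τz (n + 1) = ∑ i, (s i : ℤ) := by
    simp only [hτz]
    apply Finset.sum_congr _ (fun _ _ => rfl)
    ext i
    simp only [Finset.mem_filter, Finset.mem_univ, true_and, iff_true]
    omega
  have hτge : z2 ≤ τz p := by rw [hzsum]; exact sum_le_top s hmono hp A hA
  have hcov : ∀ j, p < j → j ≤ n + 1 → ∃ k', k' ∈ G ∧ τz j ∈ Pfin k' := by
    intro j hj hjn
    have hjgt : z2 < τz j := lt_of_le_of_lt hτge (hτmono j hjn p hj)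
    have hnotQ : τz j ∉ Qset l d s m := fun hQ => absurd (hz2.2 hQ) (not_le.2 hjgt)
    have hnall : ¬ ∀ k', τz j ∉ Pset (m k') (d k') (l k') := by
      intro hall
      exact hnotQ ⟨⟨j, hjn, hτmem j hjn⟩, hall⟩
    push_neg at hnall
    obtain ⟨k', hk'⟩ := hnall
    obtain ⟨h1, h2⟩ := hk'
    have hd' : (0 : ℤ) < (d k' : ℤ) := by exact_mod_cast hd k'
    have hmemG : k' ∈ G := by
      rw [hG, Finset.mem_filter]
      refine ⟨Finset.mem_univ _, ?_⟩
      by_contra hcon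
      push_neg at hcon
      have hml : m k' + (l k' : ℤ) < z2 * d k' := by
        by_contra h2con
        push_neg at h2con
        exact hnotP k' ⟨hcon, h2con⟩
      have hτlt : τz j < z2 := lt_of_mul_lt_mul_right (lt_of_le_of_lt h2 hml) (le_of_lt hd')
      linarith
    refine ⟨k', hmemG, ?_⟩
    have : τz j ∈ (↑(Pfin k') : Set ℤ) := by
      rw [← hPeq k']
      exact ⟨h1, h2⟩
    exact_mod_cast this
  set V : Finset ℤ := (Finset.Ioc p (n + 1)).image τz with hV
  have hVcard : V.card = n + 1 - p := by
    rw [hV, Finset.card_image_of_injOn, Nat.card_Ioc]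
    intro a ha b hb hab
    simp only [Finset.coe_Ioc, Set.mem_Ioc] at ha hb
    by_contra hne
    rcases lt_or_gt_of_ne hne with h | h
    · exact absurd hab (ne_of_lt (hτmono b hb.2 a h))
    · exact absurd hab.symm (ne_of_lt (hτmono a ha.2 b h))
  have hVsub : V ⊆ G.biUnion Pfin := by
    intro w hw
    rw [hV, Finset.mem_image] at hw
    obtain ⟨j, hj, rfl⟩ := hw
    rw [Finset.mem_Ioc] at hj
    obtain ⟨k', hk1, hk2⟩ := hcov j hj.1 hj.2
    exact Finset.mem_biUnion.2 ⟨k', hk1, hk2⟩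
  have hchain1 : (G.biUnion Pfin).card ≤ ∑ k' ∈ G, (Pfin k').card := Finset.card_biUnion_le
  have hchain2 : ∑ k' ∈ G, (Pfin k').card ≤ ∑ k' ∈ G, l k' :=
    Finset.sum_le_sum (fun k' _ => hPcard k')
  have hVle : n + 1 - p ≤ (G.biUnion Pfin).card := hVcard ▸ Finset.card_le_card hVsub
  have hGle : ∑ k' ∈ G, l k' ≤ n + 1 - p := by omega
  have hsum_eq : ∑ k' ∈ G, (Pfin k').card = ∑ k' ∈ G, l k' := by omega
  have hcards : ∀ k' ∈ G, (Pfin k').card = l k' :=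
    (Finset.sum_eq_sum_iff_of_le (fun k' _ => hPcard k')).1 hsum_eq
  have hBcard : (G.biUnion Pfin).card ≤ V.card := by omega
  have hBV : V = G.biUnion Pfin := Finset.eq_of_subset_of_card_le hVsub hBcard
  have hkG : k ∈ G := Finset.mem_filter.2 ⟨Finset.mem_univ _, hk⟩
  constructor
  · rw [hPeq k, Set.ncard_coe_finset]
    exact hcards k hkG
  · intro w hw
    have hwP : w ∈ Pfin k := by
      rw [hPeq k] at hw
      exact_mod_cast hw
    have hwB : w ∈ G.biUnion Pfin := Finset.mem_biUnion.2 ⟨k, hkG, hwP⟩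
    rw [← hBV, hV, Finset.mem_image] at hwB
    obtain ⟨j, hj, rfl⟩ := hwB
    rw [Finset.mem_Ioc] at hj
    rw [Set.mem_Icc]
    refine ⟨hτnonneg j, ?_⟩
    rw [← hτtop]
    rcases eq_or_lt_of_le hj.2 with h | h
    · rw [h]
    · exact le_of_lt (hτmono (n + 1) le_rfl j h)

theorem stmt8 (r n : ℕ) (hr : 1 ≤ r) (l d : Fin r → ℕ)
    (hl : ∀ k, 1 ≤ l k) (hd : ∀ k, 1 ≤ d k) (hsum : ∑ k, l k = n)
    (s : Fin (n + 1) → ℕ) (hs : ∀ i, 0 < s i) (hmono : Monotone s)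
    (m : Fin r → ℤ) (hsub : Nset l d s m ⊆ {0, 1})
    (hcons : ∃ ν : ℤ, ν ∈ Nset l d s m ∧ ν + 1 ∈ Nset l d s m) :
    (∀ k : Fin r,
      ((∃ z1 : ℤ, IsLeast (Qset l d s m) z1 ∧ m k + (l k : ℤ) < z1 * (d k : ℤ)) ∨
       (∃ z2 : ℤ, IsGreatest (Qset l d s m) z2 ∧ z2 * (d k : ℤ) ≤ m k)) →
      (Pset (m k) (d k) (l k)).ncard = l k) ∧
    (⋃ k, Pset (m k) (d k) (l k)) ⊆ Set.Icc (0 : ℤ) (∑ i, (s i : ℤ)) := by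
  classical
  obtain ⟨ν, hν, -⟩ := hcons
  obtain ⟨p0, hp0, z0, ⟨hz0S, hz0P⟩, -⟩ := hν
  have hQne : ∃ z, z ∈ Qset l d s m := ⟨z0, ⟨⟨p0, hp0, hz0S⟩, hz0P⟩⟩
  have hQbd : ∀ z ∈ Qset l d s m, 0 ≤ z ∧ z ≤ ∑ i, (s i : ℤ) := by
    rintro z ⟨⟨p, hp, A, hA, rfl⟩, -⟩
    constructor
    · exact Finset.sum_nonneg (fun i _ => by positivity)
    · apply Finset.sum_le_sum_of_subset_of_nonneg (Finset.subset_univ A)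
      intros
      positivity
  obtain ⟨z1, hz1Q, hz1lb⟩ :=
    Int.exists_least_of_bdd (P := fun z => z ∈ Qset l d s m)
      ⟨0, fun z hz => (hQbd z hz).1⟩ hQne
  obtain ⟨z2, hz2Q, hz2ub⟩ :=
    Int.exists_greatest_of_bdd (P := fun z => z ∈ Qset l d s m)
      ⟨_, fun z hz => (hQbd z hz).2⟩ hQne
  have hz1 : IsLeast (Qset l d s m) z1 := ⟨hz1Q, hz1lb⟩
  have hz2 : IsGreatest (Qset l d s m) z2 := ⟨hz2Q, hz2ub⟩
  constructor
  · intro k hk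
    rcases hk with ⟨z1', hz1', hlt⟩ | ⟨z2', hz2', hle⟩
    · exact (minside r n l d hl hd s hs hmono m hsub z1' hz1' k hlt).1
    · exact (maxside r n l d hl hd hsum s hs hmono m hsub z2' hz2' k hle).1
  · intro w hw
    rw [Set.mem_iUnion] at hw
    obtain ⟨k, hwk⟩ := hw
    by_cases hkF : m k + (l k : ℤ) < z1 * (d k : ℤ)
    · exact (minside r n l d hl hd s hs hmono m hsub z1 hz1 k hkF).2 hwk
    · have hz1n : z1 ∉ Pset (m k) (d k) (l k) := hz1.1.2 k
      push_neg at hkF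
      have h1 : z1 * (d k : ℤ) ≤ m k := by
        by_contra hc
        push_neg at hc
        exact hz1n ⟨hc, hkF⟩
      obtain ⟨hw1, hw2⟩ := hwk
      have hd' : (0 : ℤ) < (d k : ℤ) := by exact_mod_cast hd k
      have hwz1 : z1 < w := lt_of_mul_lt_mul_right (lt_of_le_of_lt h1 hw1) (le_of_lt hd')
      have h0z1 : 0 ≤ z1 := (hQbd z1 hz1Q).1
      by_cases hkG : z2 * (d k : ℤ) ≤ m k
      · exact (maxside r n l d hl hd hsum s hs hmono m hsub z2 hz2 k hkG).2 ⟨hw1, hw2⟩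
      · push_neg at hkG
        have hz2n : z2 ∉ Pset (m k) (d k) (l k) := hz2.1.2 k
        have h2 : m k + (l k : ℤ) < z2 * (d k : ℤ) := by
          by_contra hc
          push_neg at hc
          exact hz2n ⟨hkG, hc⟩
        have hwz2 : w < z2 := lt_of_mul_lt_mul_right (lt_of_le_of_lt hw2 h2) (le_of_lt hd')
        have hz2T := (hQbd z2 hz2Q).2
        rw [Set.mem_Icc]
        omega
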